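/- There exists a finite simple graph G that is CR-discrete (hence CR-identifiable) but is neither WM-discrete nor WM-identifiable: for some k the color refinement coloring C_k of G is injective, yet two distinct vertices x ≠ y of G satisfy w_k^G(x) = w_k^G(y) for every k, and there is a graph H not isomorphic to G on the same number n of vertices admitting a bijection f: V(G) → V(H) with w_k^G(x) = w_k^H(f(x)) for all x and all 0 ≤ k < n. -/

import Mathlib

/-- The type of colors produced after `k` rounds of color refinement. -/
def CRColor : ℕ → Type
  | 0 => Unit
  | k + 1 => CRColor k × Multiset (CRColor k)

/-- The color refinement coloring after `k` rounds: `C 0` is constant, and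
`C (k+1) x = (C k x, {{C k y : y ∈ N(x)}})`. -/
noncomputable def crColoring {V : Type*} [Fintype V] (G : SimpleGraph V) :
    (k : ℕ) → V → CRColor k
  | 0 => fun _ => ()
  | k + 1 => fun x =>
      (crColoring G k x, ((G.neighborSet x).toFinite.toFinset.val).map (crColoring G k))

/-- `walkCount G k x` is the number of walks of length `k` in `G` starting at `x`. -/
noncomputable def walkCount {V : Type*} (G : SimpleGraph V) (k : ℕ) (x : V) : ℕ :=
  Nat.card {p : (y : V) × G.Walk x y // p.2.length = k}

/-! ### Walk counts via sums -/

section WalkSum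

variable {V : Type*} [Fintype V] [DecidableEq V] (G : SimpleGraph V) [DecidableRel G.Adj]

lemma walkCount_eq_sum (k : ℕ) (x : V) :
    walkCount G k x = ∑ y : V, (G.adjMatrix ℕ ^ k) x y := by
  classical
  have e : {p : (y : V) × G.Walk x y // p.2.length = k} ≃
      ((y : V) × {w : G.Walk x y // w.length = k}) :=
    { toFun := fun p => ⟨p.1.1, p.1.2, p.2⟩
      invFun := fun q => ⟨⟨q.1, q.2.1⟩, q.2.2⟩
      left_inv := fun p => rfl
      right_inv := fun q => rfl }
  rw [walkCount, Nat.card_congr e, Nat.card_eq_fintype_card, Fintype.card_sigma]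
  refine Finset.sum_congr rfl fun y _ => ?_
  rw [SimpleGraph.adjMatrix_pow_apply_eq_card_walk]
  simp only [Nat.cast_id]
  exact Fintype.card_congr (Equiv.refl _)

lemma walkCount_zero (x : V) : walkCount G 0 x = 1 := by
  rw [walkCount_eq_sum]
  simp [Matrix.one_apply]

lemma walkCount_succ (k : ℕ) (x : V) :
    walkCount G (k + 1) x = ∑ u ∈ G.neighborFinset x, walkCount G k u := by
  rw [walkCount_eq_sum, pow_succ']
  simp only [SimpleGraph.adjMatrix_mul_apply]
  rw [Finset.sum_comm]
  exact Finset.sum_congr rfl fun u _ => (walkCount_eq_sum G k u).symm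

end WalkSum

/-! ### The two specific graphs -/

def gMask : Fin 10 → ℕ := ![360, 164, 282, 373, 140, 203, 681, 370, 653, 320]
def hMask : Fin 10 → ℕ := ![232, 164, 154, 373, 268, 331, 681, 327, 696, 320]

def Gg : SimpleGraph (Fin 10) where
  Adj i j := gMask i / 2 ^ (j : ℕ) % 2 = 1
  symm := by
    have h : ∀ a b : Fin 10, gMask a / 2 ^ (b : ℕ) % 2 = 1 → gMask b / 2 ^ (a : ℕ) % 2 = 1 := by
      decide
    exact ⟨fun a b hab => h a b hab⟩
  loopless := by
    have h : ∀ a : Fin 10, ¬ (gMask a / 2 ^ (a : ℕ) % 2 = 1) := by decide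
    exact ⟨fun a => h a⟩

def Hh : SimpleGraph (Fin 10) where
  Adj i j := hMask i / 2 ^ (j : ℕ) % 2 = 1
  symm := by
    have h : ∀ a b : Fin 10, hMask a / 2 ^ (b : ℕ) % 2 = 1 → hMask b / 2 ^ (a : ℕ) % 2 = 1 := by
      decide
    exact ⟨fun a b hab => h a b hab⟩
  loopless := by
    have h : ∀ a : Fin 10, ¬ (hMask a / 2 ^ (a : ℕ) % 2 = 1) := by decide
    exact ⟨fun a => h a⟩

instance : DecidableRel Gg.Adj := fun _ _ => inferInstanceAs (Decidable (_ = 1))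
instance : DecidableRel Hh.Adj := fun _ _ => inferInstanceAs (Decidable (_ = 1))

/-- Iterated walk-count vectors, computably. -/
def sF (M : Fin 10 → ℕ) : ℕ → Fin 10 → ℕ
  | 0, _ => 1
  | k + 1, i => ∑ j : Fin 10, if M i / 2 ^ (j : ℕ) % 2 = 1 then sF M k j else 0

lemma walkCount_Gg (k : ℕ) (x : Fin 10) : walkCount Gg k x = sF gMask k x := by
  induction k generalizing x with
  | zero => rw [walkCount_zero]; rfl
  | succ k ih =>
      rw [walkCount_succ, SimpleGraph.neighborFinset_eq_filter, Finset.sum_filter]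
      exact Finset.sum_congr rfl fun j _ => by
        by_cases h : gMask x / 2 ^ (j : ℕ) % 2 = 1
        · have h' : Gg.Adj x j := h
          rw [if_pos h', if_pos h, ih]
        · have h' : ¬ Gg.Adj x j := h
          rw [if_neg h', if_neg h]

lemma walkCount_Hh (k : ℕ) (x : Fin 10) : walkCount Hh k x = sF hMask k x := by
  induction k generalizing x with
  | zero => rw [walkCount_zero]; rfl
  | succ k ih =>
      rw [walkCount_succ, SimpleGraph.neighborFinset_eq_filter, Finset.sum_filter]
      exact Finset.sum_congr rfl fun j _ => by
        by_cases h : hMask x / 2 ^ (j : ℕ) % 2 = 1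
        · have h' : Hh.Adj x j := h
          rw [if_pos h', if_pos h, ih]
        · have h' : ¬ Hh.Adj x j := h
          rw [if_neg h', if_neg h]

/-! ### The linear recurrence satisfied by the walk vectors -/

lemma sF_rec (M : Fin 10 → ℕ)
    (hb : ∀ z, sF M 5 z + 11 * sF M 2 z = 2 * sF M 0 z + 3 * sF M 1 z + 5 * sF M 4 z) :
    ∀ k z, sF M (k + 5) z + 11 * sF M (k + 2) z
      = 2 * sF M k z + 3 * sF M (k + 1) z + 5 * sF M (k + 4) z := by
  intro k
  induction k with
  | zero => exact hb
  | succ k ih =>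
      intro z
      have E : ∀ (m : ℕ) (i : Fin 10), sF M (m + 1) i
          = ∑ j : Fin 10, if M i / 2 ^ (j : ℕ) % 2 = 1 then sF M m j else 0 :=
        fun m i => rfl
      show sF M ((k + 5) + 1) z + 11 * sF M ((k + 2) + 1) z
        = 2 * sF M (k + 1) z + 3 * sF M ((k + 1) + 1) z + 5 * sF M ((k + 4) + 1) z
      rw [E (k + 5) z, E (k + 2) z, E (k + 1) z, E k z, E (k + 4) z,
        Finset.mul_sum, Finset.mul_sum, Finset.mul_sum, Finset.mul_sum,
        ← Finset.sum_add_distrib, ← Finset.sum_add_distrib, ← Finset.sum_add_distrib]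
      refine Finset.sum_congr rfl fun j _ => ?_
      split_ifs with h
      · exact ih j
      · simp

lemma sF_g_78 : ∀ k, sF gMask k 7 = sF gMask k 8 := by
  have hrec := sF_rec gMask (by decide)
  intro k
  induction k using Nat.strong_induction_on with
  | _ k ih =>
    by_cases h5 : k < 5
    · interval_cases k <;> decide
    · obtain ⟨m, rfl⟩ : ∃ m, k = m + 5 := ⟨k - 5, by omega⟩
      have h7 := hrec m 7
      have h8 := hrec m 8
      have e0 := ih m (by omega)
      have e1 := ih (m + 1) (by omega)
      have e2 := ih (m + 2) (by omega)
      have e4 := ih (m + 4) (by omega)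
      omega

lemma sF_g_h : ∀ k z, sF gMask k z = sF hMask k z := by
  have recg := sF_rec gMask (by decide)
  have rech := sF_rec hMask (by decide)
  intro k
  induction k using Nat.strong_induction_on with
  | _ k ih =>
    by_cases h5 : k < 5
    · interval_cases k <;> decide
    · obtain ⟨m, rfl⟩ : ∃ m, k = m + 5 := ⟨k - 5, by omega⟩
      intro z
      have hg := recg m z
      have hh := rech m z
      have e0 := ih m (by omega) z
      have e1 := ih (m + 1) (by omega) z
      have e2 := ih (m + 2) (by omega) z
      have e4 := ih (m + 4) (by omega) z
      omega

/-! ### Non-isomorphy via triangle counts -/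

def triCnt (A : SimpleGraph (Fin 10)) [DecidableRel A.Adj] (v : Fin 10) : ℕ :=
  (Finset.univ.filter fun e : Fin 10 × Fin 10 =>
    A.Adj v e.1 ∧ A.Adj v e.2 ∧ A.Adj e.1 e.2).card

lemma triCnt_iso {A B : SimpleGraph (Fin 10)} [DecidableRel A.Adj] [DecidableRel B.Adj]
    (φ : A ≃g B) (v : Fin 10) : triCnt A v = triCnt B (φ v) := by
  unfold triCnt
  refine Finset.card_bij (fun e _ => (φ e.1, φ e.2)) ?_ ?_ ?_
  · intro e he
    simp only [Finset.mem_filter, Finset.mem_univ, true_and] at he ⊢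
    exact ⟨φ.map_adj_iff.mpr he.1, φ.map_adj_iff.mpr he.2.1, φ.map_adj_iff.mpr he.2.2⟩
  · intro a _ b _ hab
    have h1 : φ a.1 = φ b.1 := congrArg Prod.fst hab
    have h2 : φ a.2 = φ b.2 := congrArg Prod.snd hab
    exact Prod.ext (φ.toEquiv.injective h1) (φ.toEquiv.injective h2)
  · intro e he
    simp only [Finset.mem_filter, Finset.mem_univ, true_and] at he
    refine ⟨(φ.symm e.1, φ.symm e.2), ?_, ?_⟩
    · simp only [Finset.mem_filter, Finset.mem_univ, true_and]
      refine ⟨?_, ?_, ?_⟩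
      · exact φ.map_adj_iff.mp (by simpa using he.1)
      · exact φ.map_adj_iff.mp (by simpa using he.2.1)
      · exact φ.map_adj_iff.mp (by simpa using he.2.2)
    · simp
  
set_option maxHeartbeats 2000000 in
lemma not_iso : ¬ Nonempty (Gg ≃g Hh) := by
  rintro ⟨φ⟩
  have h1 : triCnt Gg 5 = 10 := by decide
  have h2 : ∀ w : Fin 10, triCnt Hh w ≠ 10 := by decide
  exact h2 (φ 5) (triCnt_iso φ 5 ▸ h1)

/-! ### CR-discreteness -/

/-- The degree signature of a vertex: its degree together with the multiset of
degrees of its neighbors. -/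
def degSig {V : Type*} [Fintype V] [DecidableEq V] (G : SimpleGraph V) [DecidableRel G.Adj]
    (x : V) : ℕ × Multiset ℕ :=
  (G.degree x, (G.neighborFinset x).val.map fun y => G.degree y)

lemma crColoring_one_card {V : Type*} [Fintype V] [DecidableEq V] (G : SimpleGraph V)
    [DecidableRel G.Adj] (x : V) :
    Multiset.card (crColoring G 1 x).2 = G.degree x := by
  have hn : (G.neighborSet x).toFinite.toFinset = G.neighborFinset x := by ext y; simp
  have e1 : crColoring G 1 x
      = (crColoring G 0 x, ((G.neighborSet x).toFinite.toFinset.val).map (crColoring G 0)) :=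
    rfl
  rw [e1]
  show Multiset.card (((G.neighborSet x).toFinite.toFinset.val).map (crColoring G 0)) = _
  rw [Multiset.card_map, hn]
  rfl

lemma crColoring_two_degSig {V : Type*} [Fintype V] [DecidableEq V] (G : SimpleGraph V)
    [DecidableRel G.Adj] (x : V) :
    (Multiset.card (crColoring G 2 x).1.2,
      (crColoring G 2 x).2.map fun d => Multiset.card d.2) = degSig G x := by
  have hn : (G.neighborSet x).toFinite.toFinset = G.neighborFinset x := by ext y; simp
  have e2 : crColoring G 2 x
      = (crColoring G 1 x, ((G.neighborSet x).toFinite.toFinset.val).map (crColoring G 1)) :=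
    rfl
  rw [e2]
  show (Multiset.card (crColoring G 1 x).2,
      (((G.neighborSet x).toFinite.toFinset.val).map (crColoring G 1)).map
        fun d => Multiset.card d.2) = _
  rw [Multiset.map_map, hn, crColoring_one_card]
  refine Prod.ext rfl ?_
  exact Multiset.map_congr rfl fun y _ => crColoring_one_card G y

lemma cr_injective : Function.Injective (crColoring Gg 2) := by
  have hsig : ∀ x y : Fin 10, degSig Gg x = degSig Gg y → x = y := by decide
  intro a b hab
  refine hsig a b ?_
  rw [← crColoring_two_degSig, ← crColoring_two_degSig, hab]

/-! ### Main theorem -/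

/-- There is a graph `G` that is CR-discrete, but is neither WM-discrete (two distinct
vertices have equal walk counts of every length) nor WM-identifiable (some
non-isomorphic graph `H` on the same number of vertices admits a bijection matching all
walk counts `w_k` for `k < n`). -/
theorem CRdiscrete_not_WMdiscrete_not_WMidentifiable :
    ∃ (n : ℕ) (G : SimpleGraph (Fin n)),
      (∃ k : ℕ, Function.Injective (crColoring G k)) ∧
      (∃ x y : Fin n, x ≠ y ∧ ∀ k : ℕ, walkCount G k x = walkCount G k y) ∧
      (∃ H : SimpleGraph (Fin n), ¬ Nonempty (G ≃g H) ∧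
        ∃ f : Fin n ≃ Fin n, ∀ x : Fin n, ∀ k < n, walkCount G k x = walkCount H k (f x)) := by
  refine ⟨10, Gg, ⟨2, cr_injective⟩, ⟨7, 8, by decide, fun k => ?_⟩, Hh, not_iso,
    Equiv.refl _, fun x k _ => ?_⟩
  · rw [walkCount_Gg, walkCount_Gg]; exact sF_g_78 k
  · rw [walkCount_Gg, walkCount_Hh]; exact sF_g_h k x
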